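/- Let p ≥ 2 and 1 ≤ r ≤ p−1 be integers, and let S be a p×p real symmetric positive-definite matrix with eigenvalues ℓ_1 > ℓ_2 > ⋯ > ℓ_p > 0 (all distinct) and corresponding orthonormal eigenvectors v_1, …, v_p. Assume ℓ_r > σ̂² where σ̂² = (1/(p−r))∑_{j=r+1}^p ℓ_j. Consider the set C of all p×p matrices of the form Σ = ΓΛΓᵀ + σ²(I_p − ΓΓᵀ), where Γ is a p×r real matrix with ΓᵀΓ = I_r, Λ = diag(λ_1, …, λ_r) with λ_1 > λ_2 > ⋯ > λ_r > σ² > 0. Then for every Σ ∈ C, ln det Σ + tr(S Σ⁻¹) ≥ ∑_{j=1}^r ln ℓ_j + (p−r) ln σ̂² + p, and equality is attained at Σ̂_r = ∑_{j=1}^r ℓ_j v_j v_jᵀ + σ̂² (I_p − ∑_{j=1}^r v_j v_jᵀ) ∈ C. Equivalently, Σ̂_r maximizes the Gaussian log-likelihood −(1/2)ln|Σ| − (1/2)tr(S Σ⁻¹) over the rank-r simple spiked working model. -/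

import Mathlib

open Matrix Finset

lemma tele_aux (r : ℕ) (c : ℕ → ℝ) (i : ℕ) (hi : i < r) :
    ∑ m ∈ Finset.range r, (if i ≤ m then c m - c (m+1) else 0) = c i - c r := by
  rw [← Finset.sum_filter]
  have h : (Finset.range r).filter (fun m => i ≤ m) = Finset.Ico i r := by
    ext m; simp [Finset.mem_Ico, and_comm]
  rw [h, Finset.sum_Ico_eq_sub _ (le_of_lt hi), Finset.sum_range_sub' c,
    Finset.sum_range_sub' c]
  ring

lemma swap4_aux (s t : Finset ℕ) (f : ℕ → ℕ → ℕ → ℕ → ℝ) :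
    ∑ m ∈ s, ∑ k ∈ t, ∑ i ∈ s, ∑ j ∈ t, f m k i j
    = ∑ i ∈ s, ∑ j ∈ t, ∑ m ∈ s, ∑ k ∈ t, f m k i j :=
  calc ∑ m ∈ s, ∑ k ∈ t, ∑ i ∈ s, ∑ j ∈ t, f m k i j
      = ∑ m ∈ s, ∑ i ∈ s, ∑ k ∈ t, ∑ j ∈ t, f m k i j :=
        Finset.sum_congr rfl fun m _ => Finset.sum_comm
    _ = ∑ i ∈ s, ∑ m ∈ s, ∑ k ∈ t, ∑ j ∈ t, f m k i j := Finset.sum_comm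
    _ = ∑ i ∈ s, ∑ m ∈ s, ∑ j ∈ t, ∑ k ∈ t, f m k i j :=
        Finset.sum_congr rfl fun i _ => Finset.sum_congr rfl fun m _ => Finset.sum_comm
    _ = ∑ i ∈ s, ∑ j ∈ t, ∑ m ∈ s, ∑ k ∈ t, f m k i j :=
        Finset.sum_congr rfl fun i _ => Finset.sum_comm

lemma expand_aux (p r : ℕ) (L c : ℕ → ℝ) (hLp : L p = 0) (hcr : c r = 0)
    (A : ℕ → ℕ → ℝ) :
    ∑ m ∈ range r, ∑ k ∈ range p, (c m - c (m+1)) * ((L k - L (k+1)) *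
      (∑ i ∈ range r, ∑ j ∈ range p, (if i ≤ m ∧ j ≤ k then A j i else 0)))
    = ∑ i ∈ range r, ∑ j ∈ range p, c i * L j * A j i := by
  have key : ∀ m k i j : ℕ, (c m - c (m+1)) * ((L k - L (k+1)) *
      (if i ≤ m ∧ j ≤ k then A j i else 0))
      = (if i ≤ m then c m - c (m+1) else 0) * ((if j ≤ k then L k - L (k+1) else 0) * A j i) := by
    intro m k i j
    by_cases h1 : i ≤ m <;> by_cases h2 : j ≤ k <;> simp [h1, h2]
  calc ∑ m ∈ range r, ∑ k ∈ range p, (c m - c (m+1)) * ((L k - L (k+1)) *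
      (∑ i ∈ range r, ∑ j ∈ range p, (if i ≤ m ∧ j ≤ k then A j i else 0)))
      = ∑ m ∈ range r, ∑ k ∈ range p, ∑ i ∈ range r, ∑ j ∈ range p,
        (if i ≤ m then c m - c (m+1) else 0) * ((if j ≤ k then L k - L (k+1) else 0) * A j i) := by
        simp only [Finset.mul_sum]
        exact Finset.sum_congr rfl fun m _ => Finset.sum_congr rfl fun k _ =>
          Finset.sum_congr rfl fun i _ => Finset.sum_congr rfl fun j _ => key m k i j
    _ = ∑ i ∈ range r, ∑ j ∈ range p, ∑ m ∈ range r, ∑ k ∈ range p,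
        (if i ≤ m then c m - c (m+1) else 0) * ((if j ≤ k then L k - L (k+1) else 0) * A j i) :=
        swap4_aux _ _ _
    _ = ∑ i ∈ range r, ∑ j ∈ range p, c i * L j * A j i := by
        refine Finset.sum_congr rfl fun i hi => Finset.sum_congr rfl fun j hj => ?_
        have e1 : ∑ m ∈ range r, ∑ k ∈ range p,
            (if i ≤ m then c m - c (m+1) else 0) * ((if j ≤ k then L k - L (k+1) else 0) * A j i)
            = (∑ m ∈ range r, (if i ≤ m then c m - c (m+1) else 0)) *
              ((∑ k ∈ range p, (if j ≤ k then L k - L (k+1) else 0)) * A j i) := by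
          rw [Finset.sum_mul]
          refine Finset.sum_congr rfl fun m _ => ?_
          rw [Finset.sum_mul, Finset.mul_sum]
        rw [e1, tele_aux r c i (Finset.mem_range.mp hi), tele_aux p L j (Finset.mem_range.mp hj),
          hcr, hLp, sub_zero, sub_zero, mul_assoc]

lemma kyfan_aux (p r : ℕ) (hrp : r ≤ p) (L c : ℕ → ℝ) (a : ℕ → ℕ → ℝ)
    (hL : ∀ k, k < p → L (k+1) ≤ L k) (hLp : L p = 0)
    (hc : ∀ m, m < r → c (m+1) ≤ c m) (hcr : c r = 0)
    (ha : ∀ j i, 0 ≤ a j i)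
    (hcol : ∀ i, i < r → ∑ j ∈ range p, a j i = 1)
    (hrow : ∀ j, j < p → ∑ i ∈ range r, a j i ≤ 1) :
    ∑ i ∈ range r, ∑ j ∈ range p, c i * L j * a j i ≤ ∑ i ∈ range r, c i * L i := by
  have hRHS : ∑ i ∈ range r, c i * L i
      = ∑ i ∈ range r, ∑ j ∈ range p, c i * L j * (if j = i then (1:ℝ) else 0) := by
    refine Finset.sum_congr rfl fun i hi => ?_
    have hir : i < p := lt_of_lt_of_le (Finset.mem_range.mp hi) hrp
    rw [Finset.sum_eq_single i]
    · simp
    · intro b _ hb; simp [hb]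
    · intro h; exact absurd (Finset.mem_range.mpr hir) h
  rw [hRHS, ← expand_aux p r L c hLp hcr a,
    ← expand_aux p r L c hLp hcr (fun j i => if j = i then (1:ℝ) else 0)]
  refine Finset.sum_le_sum fun m hm => Finset.sum_le_sum fun k hk => ?_
  have hmr : m < r := Finset.mem_range.mp hm
  have hkp : k < p := Finset.mem_range.mp hk
  have hε : 0 ≤ c m - c (m+1) := sub_nonneg.mpr (hc m hmr)
  have hδ : 0 ≤ L k - L (k+1) := sub_nonneg.mpr (hL k hkp)
  refine mul_le_mul_of_nonneg_left (mul_le_mul_of_nonneg_left ?_ hδ) hε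
  have cardbound : ∀ (n N : ℕ), (∑ i ∈ range n, (if i ≤ N then (1:ℝ) else 0)) ≤ (N:ℝ) + 1 := by
    intro n N
    rw [Finset.sum_boole]
    have : ((Finset.range n).filter (fun i => i ≤ N)).card ≤ N + 1 := by
      have hsub : (Finset.range n).filter (fun i => i ≤ N) ⊆ Finset.range (N+1) := by
        intro x hx
        simp only [Finset.mem_filter, Finset.mem_range] at hx ⊢
        omega
      simpa using Finset.card_le_card hsub
    exact_mod_cast this
  have hB1 : ∑ i ∈ range r, ∑ j ∈ range p, (if i ≤ m ∧ j ≤ k then a j i else 0)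
      ≤ ((m:ℝ) + 1) := by
    refine le_trans (Finset.sum_le_sum fun i hi => ?_) (cardbound r m)
    by_cases h : i ≤ m
    · simp only [h, true_and, if_true]
      calc ∑ j ∈ range p, (if j ≤ k then a j i else 0)
          ≤ ∑ j ∈ range p, a j i := by
            refine Finset.sum_le_sum fun j _ => ?_
            by_cases h2 : j ≤ k <;> simp [h2, ha j i]
        _ ≤ 1 := le_of_eq (hcol i (Finset.mem_range.mp hi))
    · simp [h]
  have hB2 : ∑ i ∈ range r, ∑ j ∈ range p, (if i ≤ m ∧ j ≤ k then a j i else 0)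
      ≤ ((k:ℝ) + 1) := by
    rw [Finset.sum_comm]
    refine le_trans (Finset.sum_le_sum fun j hj => ?_) (cardbound p k)
    by_cases h : j ≤ k
    · simp only [h, and_true, if_true]
      calc ∑ i ∈ range r, (if i ≤ m then a j i else 0)
          ≤ ∑ i ∈ range r, a j i := by
            refine Finset.sum_le_sum fun i _ => ?_
            by_cases h2 : i ≤ m <;> simp [h2, ha j i]
        _ ≤ 1 := hrow j (Finset.mem_range.mp hj)
    · simp [h]
  have hN : ∑ i ∈ range r, ∑ j ∈ range p,
      (if i ≤ m ∧ j ≤ k then (if j = i then (1:ℝ) else 0) else 0)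
      = ((min m k : ℕ) : ℝ) + 1 := by
    have inner : ∀ i ∈ range r, ∑ j ∈ range p,
        (if i ≤ m ∧ j ≤ k then (if j = i then (1:ℝ) else 0) else 0)
        = (if i ≤ m ∧ i ≤ k then (1:ℝ) else 0) := by
      intro i hi
      have hir : i < p := lt_of_lt_of_le (Finset.mem_range.mp hi) hrp
      rw [Finset.sum_eq_single i]
      · simp
      · intro b _ hb; simp [hb]
      · intro h; exact absurd (Finset.mem_range.mpr hir) h
    rw [Finset.sum_congr rfl inner, Finset.sum_boole]
    have : (Finset.range r).filter (fun i => i ≤ m ∧ i ≤ k) = Finset.range (min m k + 1) := by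
      ext x
      simp only [Finset.mem_filter, Finset.mem_range]
      omega
    rw [this]
    simp
  rw [hN]
  rcases le_total m k with h | h
  · have : min m k = m := min_eq_left h
    rw [this]; exact hB1
  · have : min m k = k := min_eq_right h
    rw [this]; exact hB2

section
variable {p r : ℕ} (Γ : Matrix (Fin p) (Fin r) ℝ) (μ : Fin r → ℝ) (t : ℝ)

lemma inv_formula (hΓ : Γᵀ * Γ = 1) (hμ : ∀ i, μ i ≠ 0) (ht : t ≠ 0) :
    (Γ * Matrix.diagonal μ * Γᵀ + t • ((1 : Matrix (Fin p) (Fin p) ℝ) - Γ * Γᵀ))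
    * (Γ * Matrix.diagonal (fun i => (μ i)⁻¹) * Γᵀ
        + t⁻¹ • ((1 : Matrix (Fin p) (Fin p) ℝ) - Γ * Γᵀ)) = 1 := by
  have hcan : ∀ {m : Type} [Fintype m] (X : Matrix (Fin r) m ℝ), Γᵀ * (Γ * X) = X := by
    intro m _ X; rw [← Matrix.mul_assoc, hΓ, Matrix.one_mul]
  have hDE : ∀ {m : Type} [Fintype m] (X : Matrix (Fin r) m ℝ),
      Matrix.diagonal μ * (Matrix.diagonal (fun i => (μ i)⁻¹) * X) = X := by
    intro m _ X
    rw [← Matrix.mul_assoc, Matrix.diagonal_mul_diagonal]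
    have : (fun i => μ i * (μ i)⁻¹) = fun _ => (1:ℝ) := by
      funext i; exact mul_inv_cancel₀ (hμ i)
    rw [this, Matrix.diagonal_one, Matrix.one_mul]
  simp only [Matrix.mul_add, Matrix.add_mul, Matrix.mul_sub, Matrix.sub_mul,
    Matrix.smul_mul, Matrix.mul_smul, Matrix.mul_one, Matrix.one_mul,
    Matrix.mul_assoc, hcan, hDE, smul_smul, mul_inv_cancel₀ ht, one_smul,
    smul_sub]
  simp only [smul_add, smul_smul, inv_mul_cancel₀ ht, one_smul, neg_smul]
  match_scalars <;> field_simp <;> ring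
end

section
variable {p r : ℕ} (Γ : Matrix (Fin p) (Fin r) ℝ) (μ : Fin r → ℝ) (t : ℝ)

lemma det_formula (hΓ : Γᵀ * Γ = 1) (ht : t ≠ 0) :
    (Γ * Matrix.diagonal μ * Γᵀ + t • ((1 : Matrix (Fin p) (Fin p) ℝ) - Γ * Γᵀ)).det
    = t ^ p * ∏ i : Fin r, (μ i / t) := by
  have h1 : Γ * Matrix.diagonal μ * Γᵀ + t • ((1 : Matrix (Fin p) (Fin p) ℝ) - Γ * Γᵀ)
      = t • ((1 : Matrix (Fin p) (Fin p) ℝ)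
          + (t⁻¹ • (Γ * (Matrix.diagonal μ - t • (1 : Matrix (Fin r) (Fin r) ℝ)))) * Γᵀ) := by
    simp only [Matrix.mul_sub, Matrix.sub_mul, Matrix.smul_mul, smul_add, smul_smul,
      mul_inv_cancel₀ ht, one_smul, smul_sub, Matrix.mul_one, Matrix.one_mul, Matrix.mul_smul, Matrix.mul_assoc]
    match_scalars <;> field_simp
  rw [h1, Matrix.det_smul, Matrix.det_one_add_mul_comm]
  have h2 : Γᵀ * (t⁻¹ • (Γ * (Matrix.diagonal μ - t • (1 : Matrix (Fin r) (Fin r) ℝ))))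
      = t⁻¹ • (Matrix.diagonal μ - t • (1 : Matrix (Fin r) (Fin r) ℝ)) := by
    rw [Matrix.mul_smul, ← Matrix.mul_assoc, hΓ, Matrix.one_mul]
  rw [h2]
  have h3 : (1 : Matrix (Fin r) (Fin r) ℝ)
      + t⁻¹ • (Matrix.diagonal μ - t • (1 : Matrix (Fin r) (Fin r) ℝ))
      = Matrix.diagonal (fun i => μ i / t) := by
    ext i j
    by_cases h : i = j
    · subst h
      simp only [Matrix.add_apply, Matrix.one_apply_eq, Matrix.smul_apply, Matrix.sub_apply,
        Matrix.diagonal_apply_eq, smul_eq_mul]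
      field_simp
      ring
    · simp [Matrix.one_apply_ne h, Matrix.diagonal_apply_ne _ h, h]
  rw [h3, Matrix.det_diagonal]
  simp [Fintype.card_fin]
end

section
variable {p r : ℕ} (Γ : Matrix (Fin p) (Fin r) ℝ) (μ : Fin r → ℝ) (t : ℝ)

lemma logdet_formula (hΓ : Γᵀ * Γ = 1) (ht : 0 < t) (hμ : ∀ i, 0 < μ i) (hrp : r ≤ p) :
    Real.log (Γ * Matrix.diagonal μ * Γᵀ + t • ((1 : Matrix (Fin p) (Fin p) ℝ) - Γ * Γᵀ)).det
    = (∑ i : Fin r, Real.log (μ i)) + ((p:ℝ) - (r:ℝ)) * Real.log t := by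
  rw [det_formula Γ μ t hΓ (ne_of_gt ht)]
  have h2 : ∀ i : Fin r, μ i / t ≠ 0 := fun i => div_ne_zero (ne_of_gt (hμ i)) (ne_of_gt ht)
  rw [Real.log_mul (pow_ne_zero _ (ne_of_gt ht)) (Finset.prod_ne_zero_iff.mpr fun i _ => h2 i),
    Real.log_pow, Real.log_prod (fun i _ => h2 i)]
  have h3 : ∀ i : Fin r, Real.log (μ i / t) = Real.log (μ i) - Real.log t := fun i =>
    Real.log_div (ne_of_gt (hμ i)) (ne_of_gt ht)
  rw [Finset.sum_congr rfl fun i _ => h3 i, Finset.sum_sub_distrib]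
  simp only [Finset.sum_const, Finset.card_univ, Fintype.card_fin, nsmul_eq_mul]
  push_cast
  ring

lemma trace_formula (S : Matrix (Fin p) (Fin p) ℝ) (ν : Fin r → ℝ) (s : ℝ) :
    Matrix.trace (S * (Γ * Matrix.diagonal ν * Γᵀ
        + s • ((1 : Matrix (Fin p) (Fin p) ℝ) - Γ * Γᵀ)))
    = (∑ i : Fin r, (Γᵀ * S * Γ) i i * ν i)
      + s * (Matrix.trace S - ∑ i : Fin r, (Γᵀ * S * Γ) i i) := by
  rw [Matrix.mul_add, Matrix.trace_add, Matrix.mul_smul, Matrix.trace_smul, Matrix.mul_sub,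
    Matrix.mul_one, Matrix.trace_sub, smul_eq_mul]
  congr 1
  · have e1 : S * (Γ * Matrix.diagonal ν * Γᵀ) = (S * Γ * Matrix.diagonal ν) * Γᵀ := by
      simp only [Matrix.mul_assoc]
    rw [e1, Matrix.trace_mul_comm, ← Matrix.mul_assoc, ← Matrix.mul_assoc]
    simp [Matrix.trace, Matrix.diag, Matrix.mul_diagonal, Finset.sum_congr]
  · congr 1
    have e2 : S * (Γ * Γᵀ) = (S * Γ) * Γᵀ := by rw [Matrix.mul_assoc]
    rw [e2, Matrix.trace_mul_comm, ← Matrix.mul_assoc]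
    simp [Matrix.trace, Matrix.diag]

lemma log_bound (a x : ℝ) (ha : 0 < a) (hx : 0 < x) :
    Real.log a + 1 ≤ Real.log x + a / x := by
  have h := Real.log_le_sub_one_of_pos (show (0:ℝ) < a / x from div_pos ha hx)
  rw [Real.log_div (ne_of_gt ha) (ne_of_gt hx)] at h
  linarith

lemma dsum (n : ℕ) (f : Fin n → ℝ) :
    ∑ j ∈ range n, (if h : j < n then f ⟨j, h⟩ else 0) = ∑ j : Fin n, f j := by
  rw [← Fin.sum_univ_eq_sum_range (fun j => if h : j < n then f ⟨j, h⟩ else 0) n]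
  exact Finset.sum_congr rfl fun i _ => by simp [i.isLt]

lemma filter_sum (hrp : r ≤ p) (f : Fin p → ℝ) :
    ∑ j ∈ Finset.univ.filter (fun j : Fin p => (j : ℕ) < r), f j
    = ∑ i : Fin r, f (Fin.castLE hrp i) := by
  refine Finset.sum_bij' (i := fun (j : Fin p) (hj : j ∈ Finset.univ.filter
      (fun j : Fin p => (j:ℕ) < r)) => (⟨(j:ℕ), by simpa using hj⟩ : Fin r))
    (j := fun (i : Fin r) _ => Fin.castLE hrp i) ?_ ?_ ?_ ?_ ?_
  · intro a ha; exact Finset.mem_univ _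
  · intro a ha; simp [a.isLt]
  · intro a ha; simp [Fin.ext_iff]
  · intro a ha; simp [Fin.ext_iff]
  · intro a ha; rfl
end

section
variable {p r : ℕ} (v : Fin p → Fin p → ℝ)

lemma parseval (horth : ∀ i j : Fin p, v i ⬝ᵥ v j = if i = j then (1 : ℝ) else 0)
    (x y : Fin p → ℝ) : ∑ j : Fin p, (v j ⬝ᵥ x) * (v j ⬝ᵥ y) = x ⬝ᵥ y := by
  have hVVt : (Matrix.of v) * (Matrix.of v)ᵀ = 1 := by
    ext i j
    simpa [Matrix.mul_apply, Matrix.one_apply, dotProduct] using horth i j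
  have hVtV : (Matrix.of v)ᵀ * (Matrix.of v) = 1 := mul_eq_one_comm.mp hVVt
  have hcomp : ∀ a b : Fin p, ∑ j : Fin p, v j a * v j b = if a = b then (1:ℝ) else 0 := by
    intro a b
    have := congrFun (congrFun hVtV a) b
    simpa [Matrix.mul_apply, Matrix.one_apply] using this
  calc ∑ j : Fin p, (v j ⬝ᵥ x) * (v j ⬝ᵥ y)
      = ∑ j : Fin p, ∑ a : Fin p, ∑ b : Fin p, (v j a * v j b) * (x a * y b) := by
        refine Finset.sum_congr rfl fun j _ => ?_
        rw [dotProduct, dotProduct, Finset.sum_mul_sum]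
        exact Finset.sum_congr rfl fun a _ => Finset.sum_congr rfl fun b _ => by ring
    _ = ∑ a : Fin p, ∑ b : Fin p, (∑ j : Fin p, v j a * v j b) * (x a * y b) := by
        rw [Finset.sum_comm]
        refine Finset.sum_congr rfl fun a _ => ?_
        rw [Finset.sum_comm]
        exact Finset.sum_congr rfl fun b _ => (Finset.sum_mul _ _ _).symm
    _ = ∑ a : Fin p, x a * y a := by
        refine Finset.sum_congr rfl fun a _ => ?_
        rw [Finset.sum_eq_single a]
        · simp [hcomp a a]
        · intro b _ hb; simp [hcomp a b, (Ne.symm hb)]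
        · intro h; exact absurd (Finset.mem_univ a) h
    _ = x ⬝ᵥ y := rfl

lemma bessel (Γ : Matrix (Fin p) (Fin r) ℝ) (hΓ : Γᵀ * Γ = 1) (x : Fin p → ℝ) :
    ∑ i : Fin r, (x ⬝ᵥ (fun a => Γ a i))^2 ≤ x ⬝ᵥ x := by
  have hgram : ∀ i i' : Fin r, (fun a => Γ a i) ⬝ᵥ (fun a => Γ a i')
      = if i = i' then (1:ℝ) else 0 := by
    intro i i'
    have := congrFun (congrFun hΓ i) i'
    simpa [Matrix.mul_apply, Matrix.one_apply, dotProduct] using this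
  set c : Fin r → ℝ := fun i => x ⬝ᵥ (fun a => Γ a i) with hc
  set w : Fin p → ℝ := fun a => x a - ∑ i : Fin r, c i * Γ a i with hw
  have hww : w ⬝ᵥ w = x ⬝ᵥ x - ∑ i : Fin r, (c i)^2 := by
    simp only [dotProduct, hw]
    have expand : ∀ a : Fin p, (x a - ∑ i : Fin r, c i * Γ a i) * (x a - ∑ i : Fin r, c i * Γ a i)
        = x a * x a - 2 * (x a * ∑ i : Fin r, c i * Γ a i)
          + (∑ i : Fin r, c i * Γ a i) * (∑ i' : Fin r, c i' * Γ a i') := by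
      intro a; ring
    rw [Finset.sum_congr rfl fun a _ => expand a]
    rw [Finset.sum_add_distrib, Finset.sum_sub_distrib]
    have t1 : ∑ a : Fin p, x a * ∑ i : Fin r, c i * Γ a i = ∑ i : Fin r, (c i)^2 := by
      simp only [Finset.mul_sum]
      rw [Finset.sum_comm]
      refine Finset.sum_congr rfl fun i _ => ?_
      have e : ∑ a : Fin p, x a * (c i * Γ a i) = c i * ∑ a : Fin p, x a * Γ a i := by
        rw [Finset.mul_sum]; exact Finset.sum_congr rfl fun a _ => by ring
      rw [e]
      have hci : (∑ a : Fin p, x a * Γ a i) = c i := rfl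
      rw [hci]; ring
    have t2 : ∑ a : Fin p, (∑ i : Fin r, c i * Γ a i) * (∑ i' : Fin r, c i' * Γ a i')
        = ∑ i : Fin r, (c i)^2 := by
      have e : ∀ a : Fin p, (∑ i : Fin r, c i * Γ a i) * (∑ i' : Fin r, c i' * Γ a i')
          = ∑ i : Fin r, ∑ i' : Fin r, (c i * c i') * (Γ a i * Γ a i') := by
        intro a
        rw [Finset.sum_mul_sum]
        exact Finset.sum_congr rfl fun i _ => Finset.sum_congr rfl fun i' _ => by ring
      rw [Finset.sum_congr rfl fun a _ => e a, Finset.sum_comm]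
      refine Finset.sum_congr rfl fun i _ => ?_
      rw [Finset.sum_comm, Finset.sum_eq_single i]
      · have e2 : ∑ a : Fin p, (c i * c i) * (Γ a i * Γ a i)
            = (c i * c i) * ∑ a : Fin p, Γ a i * Γ a i := by rw [Finset.mul_sum]
        rw [e2]
        have hg := hgram i i
        simp only [if_pos rfl] at hg
        have : (∑ a : Fin p, Γ a i * Γ a i) = (1:ℝ) := hg
        rw [this]; ring
      · intro i' _ hne
        have e2 : ∑ a : Fin p, (c i * c i') * (Γ a i * Γ a i')
            = (c i * c i') * ∑ a : Fin p, Γ a i * Γ a i' := by rw [Finset.mul_sum]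
        rw [e2]
        have hg := hgram i i'
        rw [if_neg (Ne.symm hne)] at hg
        have : (∑ a : Fin p, Γ a i * Γ a i') = (0:ℝ) := hg
        rw [this]; ring
      · intro h; exact absurd (Finset.mem_univ i) h
    have t1' : ∑ a : Fin p, 2 * (x a * ∑ i : Fin r, c i * Γ a i)
        = 2 * ∑ i : Fin r, (c i)^2 := by
      rw [← Finset.mul_sum, t1]
    rw [t1', t2]
    ring
  have : (0:ℝ) ≤ w ⬝ᵥ w := Finset.sum_nonneg fun a _ => mul_self_nonneg _
  rw [hww] at this
  simp only [hc] at *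
  linarith
end

section
variable {p r : ℕ} (v : Fin p → Fin p → ℝ) (ev : Fin p → ℝ)

lemma q_formula (Γ : Matrix (Fin p) (Fin r) ℝ) (S : Matrix (Fin p) (Fin p) ℝ)
    (hS : S = ∑ j : Fin p, ev j • Matrix.vecMulVec (v j) (v j)) (i : Fin r) :
    (Γᵀ * S * Γ) i i = ∑ j : Fin p, ev j * ((v j) ⬝ᵥ (fun a => Γ a i))^2 := by
  have key : ∀ x : Fin p → ℝ, (Γᵀ * Matrix.vecMulVec x x * Γ) i i
      = (x ⬝ᵥ (fun a => Γ a i))^2 := by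
    intro x
    simp only [Matrix.mul_apply, Matrix.vecMulVec_apply, Matrix.transpose_apply,
      dotProduct]
    rw [sq, Finset.sum_mul_sum]
    rw [Finset.sum_comm]
    refine Finset.sum_congr rfl fun b _ => ?_
    rw [Finset.sum_mul]
    refine Finset.sum_congr rfl fun a _ => by ring
  rw [hS]
  have e : Γᵀ * (∑ j : Fin p, ev j • Matrix.vecMulVec (v j) (v j)) * Γ
      = ∑ j : Fin p, ev j • (Γᵀ * Matrix.vecMulVec (v j) (v j) * Γ) := by
    rw [Matrix.mul_sum, Matrix.sum_mul]
    refine Finset.sum_congr rfl fun j _ => ?_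
    rw [Matrix.mul_smul, Matrix.smul_mul]
  rw [e, Matrix.sum_apply]
  refine Finset.sum_congr rfl fun j _ => ?_
  rw [Matrix.smul_apply, key, smul_eq_mul]

lemma traceS (S : Matrix (Fin p) (Fin p) ℝ)
    (hS : S = ∑ j : Fin p, ev j • Matrix.vecMulVec (v j) (v j))
    (horth : ∀ i j : Fin p, v i ⬝ᵥ v j = if i = j then (1 : ℝ) else 0) :
    Matrix.trace S = ∑ j : Fin p, ev j := by
  rw [hS, Matrix.trace_sum]
  refine Finset.sum_congr rfl fun j _ => ?_
  rw [Matrix.trace_smul, smul_eq_mul]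
  have : Matrix.trace (Matrix.vecMulVec (v j) (v j)) = v j ⬝ᵥ v j := by
    simp [Matrix.trace, Matrix.diag, Matrix.vecMulVec_apply, dotProduct]
  rw [this, horth j j, if_pos rfl, mul_one]
end

theorem stmt12 (p r : ℕ) (hp : 2 ≤ p) (hr1 : 1 ≤ r) (hrp : r ≤ p - 1)
    (ev : Fin p → ℝ) (v : Fin p → Fin p → ℝ)
    (hdec : ∀ i j : Fin p, i < j → ev j < ev i)
    (hpos : ∀ j : Fin p, 0 < ev j)
    (horth : ∀ i j : Fin p, v i ⬝ᵥ v j = if i = j then (1 : ℝ) else 0)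
    (S : Matrix (Fin p) (Fin p) ℝ)
    (hS : S = ∑ j : Fin p, ev j • Matrix.vecMulVec (v j) (v j))
    (σhat : ℝ)
    (hσhat : σhat = (1 / ((p : ℝ) - (r : ℝ))) *
      ∑ j ∈ Finset.univ.filter (fun j : Fin p => r ≤ (j : ℕ)), ev j)
    (hgap : ∀ j : Fin p, (j : ℕ) < r → σhat < ev j)
    (Sig : Matrix (Fin p) (Fin p) ℝ)
    (hSig : Sig = (∑ j ∈ Finset.univ.filter (fun j : Fin p => (j : ℕ) < r),
        ev j • Matrix.vecMulVec (v j) (v j)) +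
      σhat • ((1 : Matrix (Fin p) (Fin p) ℝ) -
        ∑ j ∈ Finset.univ.filter (fun j : Fin p => (j : ℕ) < r),
          Matrix.vecMulVec (v j) (v j))) :
    (∀ (Γ : Matrix (Fin p) (Fin r) ℝ) (μ : Fin r → ℝ) (t2 : ℝ),
      Γᵀ * Γ = 1 → (∀ i j : Fin r, i < j → μ j < μ i) → (∀ i : Fin r, t2 < μ i) → 0 < t2 →
      Real.log (Γ * Matrix.diagonal μ * Γᵀ
            + t2 • ((1 : Matrix (Fin p) (Fin p) ℝ) - Γ * Γᵀ)).det
          + Matrix.trace (S * (Γ * Matrix.diagonal μ * Γᵀ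
            + t2 • ((1 : Matrix (Fin p) (Fin p) ℝ) - Γ * Γᵀ))⁻¹)
        ≥ (∑ j ∈ Finset.univ.filter (fun j : Fin p => (j : ℕ) < r), Real.log (ev j))
          + ((p : ℝ) - (r : ℝ)) * Real.log σhat + (p : ℝ)) ∧
    (Real.log Sig.det + Matrix.trace (S * Sig⁻¹)
      = (∑ j ∈ Finset.univ.filter (fun j : Fin p => (j : ℕ) < r), Real.log (ev j))
        + ((p : ℝ) - (r : ℝ)) * Real.log σhat + (p : ℝ)) ∧
    (∃ (Γ : Matrix (Fin p) (Fin r) ℝ) (μ : Fin r → ℝ) (t2 : ℝ),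
      Γᵀ * Γ = 1 ∧ (∀ i j : Fin r, i < j → μ j < μ i) ∧ (∀ i : Fin r, t2 < μ i) ∧ 0 < t2 ∧
      Sig = Γ * Matrix.diagonal μ * Γᵀ
        + t2 • ((1 : Matrix (Fin p) (Fin p) ℝ) - Γ * Γᵀ)) := by
  have hrp' : r ≤ p := by omega
  have hrlt : r < p := by omega
  have hprR : (0:ℝ) < (p:ℝ) - (r:ℝ) := by
    have : (r:ℝ) < (p:ℝ) := by exact_mod_cast hrlt
    linarith
  set ℓ : Fin r → ℝ := fun i => ev (Fin.castLE hrp' i) with hℓ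
  have hℓpos : ∀ i, 0 < ℓ i := fun i => hpos _
  have htrS : Matrix.trace S = ∑ j : Fin p, ev j := traceS v ev S hS horth
  have hfsum : ∀ f : Fin p → ℝ,
      ∑ j ∈ Finset.univ.filter (fun j : Fin p => (j:ℕ) < r), f j
      = ∑ i : Fin r, f (Fin.castLE hrp' i) := fun f => filter_sum hrp' f
  have htail : ∑ j ∈ Finset.univ.filter (fun j : Fin p => r ≤ (j:ℕ)), ev j
      = σhat * ((p:ℝ) - (r:ℝ)) := by
    rw [hσhat]; field_simp
  have hσpos : 0 < σhat := by
    have hne : (Finset.univ.filter (fun j : Fin p => r ≤ (j:ℕ))).Nonempty := by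
      refine ⟨⟨p-1, by omega⟩, ?_⟩
      simp only [Finset.mem_filter, Finset.mem_univ, true_and]
      omega
    have hsum : 0 < ∑ j ∈ Finset.univ.filter (fun j : Fin p => r ≤ (j:ℕ)), ev j :=
      Finset.sum_pos (fun j _ => hpos j) hne
    rw [hσhat]
    exact mul_pos (by positivity) hsum
  have hsplitS : Matrix.trace S - ∑ i : Fin r, ℓ i = σhat * ((p:ℝ) - (r:ℝ)) := by
    rw [htrS, ← htail]
    have hsp := Finset.sum_filter_add_sum_filter_not Finset.univ
      (fun j : Fin p => (j:ℕ) < r) ev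
    have hcompl : Finset.univ.filter (fun j : Fin p => ¬ (j:ℕ) < r)
        = Finset.univ.filter (fun j : Fin p => r ≤ (j:ℕ)) := by
      apply Finset.filter_congr; intro j _; simp [not_lt]
    rw [hcompl] at hsp
    have h1 := hfsum ev
    simp only [hℓ]
    linarith
  -- core identity
  have core : ∀ (Γ : Matrix (Fin p) (Fin r) ℝ) (μ : Fin r → ℝ) (t2 : ℝ),
      Γᵀ * Γ = 1 → (∀ i, 0 < μ i) → 0 < t2 →
      Real.log (Γ * Matrix.diagonal μ * Γᵀ
          + t2 • ((1 : Matrix (Fin p) (Fin p) ℝ) - Γ * Γᵀ)).det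
        + Matrix.trace (S * (Γ * Matrix.diagonal μ * Γᵀ
          + t2 • ((1 : Matrix (Fin p) (Fin p) ℝ) - Γ * Γᵀ))⁻¹)
      = (∑ i : Fin r, (Real.log (μ i) + (Γᵀ * S * Γ) i i * (μ i)⁻¹))
        + (((p:ℝ) - (r:ℝ)) * Real.log t2
          + t2⁻¹ * (Matrix.trace S - ∑ i : Fin r, (Γᵀ * S * Γ) i i)) := by
    intro Γ μ t2 hΓ hμ ht
    have hinv : (Γ * Matrix.diagonal μ * Γᵀ
        + t2 • ((1 : Matrix (Fin p) (Fin p) ℝ) - Γ * Γᵀ))⁻¹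
        = Γ * Matrix.diagonal (fun i => (μ i)⁻¹) * Γᵀ
          + t2⁻¹ • ((1 : Matrix (Fin p) (Fin p) ℝ) - Γ * Γᵀ) :=
      Matrix.inv_eq_right_inv (inv_formula Γ μ t2 hΓ (fun i => ne_of_gt (hμ i)) (ne_of_gt ht))
    rw [hinv, trace_formula Γ S (fun i => (μ i)⁻¹) t2⁻¹,
      logdet_formula Γ μ t2 hΓ ht hμ hrp', Finset.sum_add_distrib]
    ring
  -- the canonical Γ₀
  set Γ₀ : Matrix (Fin p) (Fin r) ℝ :=
    Matrix.of (fun (a : Fin p) (i : Fin r) => v (Fin.castLE hrp' i) a) with hΓ₀def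
  have hΓ₀ : Γ₀ᵀ * Γ₀ = 1 := by
    ext i i'
    simp only [Matrix.mul_apply, Matrix.transpose_apply, hΓ₀def, Matrix.of_apply,
      Matrix.one_apply]
    have h2 : (∑ a : Fin p, v (Fin.castLE hrp' i) a * v (Fin.castLE hrp' i') a)
        = if Fin.castLE hrp' i = Fin.castLE hrp' i' then (1:ℝ) else 0 :=
      horth (Fin.castLE hrp' i) (Fin.castLE hrp' i')
    rw [h2]
    by_cases h : i = i' <;> simp [h, Fin.castLE_inj]
  have hμ₀dec : ∀ i j : Fin r, i < j → ℓ j < ℓ i := by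
    intro i j hij
    have h' : (Fin.castLE hrp' i) < (Fin.castLE hrp' j) := by
      rw [Fin.lt_def]
      simp only [Fin.coe_castLE]
      exact hij
    exact hdec _ _ h'
  have hgap₀ : ∀ i : Fin r, σhat < ℓ i := fun i => hgap _ (by simpa using i.isLt)
  have hSigEq : Sig = Γ₀ * Matrix.diagonal ℓ * Γ₀ᵀ
      + σhat • ((1 : Matrix (Fin p) (Fin p) ℝ) - Γ₀ * Γ₀ᵀ) := by
    rw [hSig]
    have hPP : (∑ j ∈ Finset.univ.filter (fun j : Fin p => (j : ℕ) < r),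
        Matrix.vecMulVec (v j) (v j)) = Γ₀ * Γ₀ᵀ := by
      ext a b
      rw [Matrix.sum_apply]
      have e1 : ∀ j ∈ Finset.univ.filter (fun j : Fin p => (j : ℕ) < r),
          (Matrix.vecMulVec (v j) (v j)) a b = v j a * v j b := by
        intro j _; rw [Matrix.vecMulVec_apply]
      rw [Finset.sum_congr rfl e1, hfsum (fun j => v j a * v j b)]
      simp only [Matrix.mul_apply, Matrix.transpose_apply, hΓ₀def, Matrix.of_apply]
    have hDD : (∑ j ∈ Finset.univ.filter (fun j : Fin p => (j : ℕ) < r),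
        ev j • Matrix.vecMulVec (v j) (v j)) = Γ₀ * Matrix.diagonal ℓ * Γ₀ᵀ := by
      ext a b
      rw [Matrix.sum_apply]
      have e1 : ∀ j ∈ Finset.univ.filter (fun j : Fin p => (j : ℕ) < r),
          (ev j • Matrix.vecMulVec (v j) (v j)) a b = ev j * (v j a * v j b) := by
        intro j _; rw [Matrix.smul_apply, Matrix.vecMulVec_apply, smul_eq_mul]
      rw [Finset.sum_congr rfl e1, hfsum (fun j => ev j * (v j a * v j b)),
        Matrix.mul_apply]
      refine Finset.sum_congr rfl fun i _ => ?_
      rw [Matrix.mul_diagonal, Matrix.transpose_apply]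
      simp only [hΓ₀def, Matrix.of_apply, hℓ]
      ring
    rw [hPP, hDD]
  have hq₀ : ∀ i : Fin r, (Γ₀ᵀ * S * Γ₀) i i = ℓ i := by
    intro i
    rw [q_formula v ev Γ₀ S hS i]
    have hγ : (fun a => Γ₀ a i) = v (Fin.castLE hrp' i) := rfl
    rw [hγ]
    rw [Finset.sum_eq_single (Fin.castLE hrp' i)]
    · rw [horth]; simp [hℓ]
    · intro b _ hb; rw [horth]; simp [hb]
    · intro h; exact absurd (Finset.mem_univ _) h
  refine ⟨?_, ?_, ⟨Γ₀, ℓ, σhat, hΓ₀, hμ₀dec, hgap₀, hσpos, hSigEq⟩⟩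
  · -- part 1: the inequality
    intro Γ μ t2 hΓ hμdec hμt ht
    have hμpos : ∀ i, 0 < μ i := fun i => lt_trans ht (hμt i)
    set q : Fin r → ℝ := fun i => (Γᵀ * S * Γ) i i with hq
    have hqf : ∀ i : Fin r, q i = ∑ j : Fin p, ev j * ((v j) ⬝ᵥ (fun a => Γ a i))^2 :=
      fun i => q_formula v ev Γ S hS i
    -- Ky Fan step
    have KF : ∑ i : Fin r, (t2⁻¹ - (μ i)⁻¹) * q i
        ≤ ∑ i : Fin r, (t2⁻¹ - (μ i)⁻¹) * ℓ i := by
      set L : ℕ → ℝ := fun k => if h : k < p then ev ⟨k, h⟩ else 0 with hLdef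
      set c : ℕ → ℝ := fun m => if h : m < r then t2⁻¹ - (μ ⟨m, h⟩)⁻¹ else 0 with hcdef
      set A : ℕ → ℕ → ℝ := fun j i => if hj : j < p then (if hi : i < r then
        ((v ⟨j, hj⟩) ⬝ᵥ (fun b => Γ b ⟨i, hi⟩))^2 else 0) else 0 with hAdef
      have h1 : ∀ k, k < p → L (k+1) ≤ L k := by
        intro k hk
        by_cases h : k + 1 < p
        · simp only [hLdef, dif_pos h, dif_pos hk]
          exact le_of_lt (hdec ⟨k, hk⟩ ⟨k+1, h⟩ (by simp [Fin.lt_def]))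
        · simp only [hLdef, dif_neg h, dif_pos hk]
          exact (hpos ⟨k, hk⟩).le
      have h2 : L p = 0 := by simp [hLdef]
      have h3 : ∀ m, m < r → c (m+1) ≤ c m := by
        intro m hm
        by_cases h : m + 1 < r
        · simp only [hcdef, dif_pos h, dif_pos hm]
          have hlt : μ ⟨m+1, h⟩ ≤ μ ⟨m, hm⟩ :=
            le_of_lt (hμdec ⟨m, hm⟩ ⟨m+1, h⟩ (by simp [Fin.lt_def]))
          have hinv : (μ ⟨m, hm⟩)⁻¹ ≤ (μ ⟨m+1, h⟩)⁻¹ := inv_anti₀ (hμpos _) hlt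
          linarith
        · simp only [hcdef, dif_neg h, dif_pos hm]
          have hinv : (μ ⟨m, hm⟩)⁻¹ ≤ t2⁻¹ := inv_anti₀ ht (le_of_lt (hμt _))
          linarith
      have h4 : c r = 0 := by simp [hcdef]
      have h5 : ∀ j i, 0 ≤ A j i := by
        intro j i; simp only [hAdef]; split_ifs <;> positivity
      have h6 : ∀ i, i < r → ∑ j ∈ Finset.range p, A j i = 1 := by
        intro i hi
        have e1 : ∀ j ∈ Finset.range p, A j i
            = (if hj : j < p then ((v ⟨j, hj⟩) ⬝ᵥ (fun b => Γ b ⟨i, hi⟩))^2 else 0) := by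
          intro j _; simp only [hAdef, dif_pos hi]
        rw [Finset.sum_congr rfl e1,
          dsum p (fun j => ((v j) ⬝ᵥ (fun b => Γ b ⟨i, hi⟩))^2)]
        simp only [sq]
        rw [parseval v horth _ _]
        simpa [Matrix.mul_apply, Matrix.one_apply, dotProduct] using
          congrFun (congrFun hΓ ⟨i, hi⟩) ⟨i, hi⟩
      have h7 : ∀ j, j < p → ∑ i ∈ Finset.range r, A j i ≤ 1 := by
        intro j hj
        have e1 : ∀ i ∈ Finset.range r, A j i
            = (if hi : i < r then ((v ⟨j, hj⟩) ⬝ᵥ (fun b => Γ b ⟨i, hi⟩))^2 else 0) := by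
          intro i _; simp only [hAdef, dif_pos hj]
        rw [Finset.sum_congr rfl e1,
          dsum r (fun i => ((v ⟨j, hj⟩) ⬝ᵥ (fun b => Γ b i))^2)]
        have hb := bessel Γ hΓ (v ⟨j, hj⟩)
        have hvv : (v ⟨j, hj⟩) ⬝ᵥ (v ⟨j, hj⟩) = 1 := by rw [horth]; simp
        rw [hvv] at hb
        exact hb
      have hKF := kyfan_aux p r hrp' L c A h1 h2 h3 h4 h5 h6 h7
      have conv1 : ∑ i ∈ Finset.range r, ∑ j ∈ Finset.range p, c i * L j * A j i
          = ∑ i : Fin r, (t2⁻¹ - (μ i)⁻¹) * q i := by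
        rw [← dsum r (fun i => (t2⁻¹ - (μ i)⁻¹) * q i)]
        refine Finset.sum_congr rfl fun i hi => ?_
        have hi' : i < r := Finset.mem_range.mp hi
        rw [dif_pos hi']
        have e2 : ∀ j ∈ Finset.range p, c i * L j * A j i
            = (t2⁻¹ - (μ ⟨i, hi'⟩)⁻¹) * (if hj : j < p then
              ev ⟨j, hj⟩ * ((v ⟨j, hj⟩) ⬝ᵥ (fun b => Γ b ⟨i, hi'⟩))^2 else 0) := by
          intro j hj
          have hj' : j < p := Finset.mem_range.mp hj
          simp only [hcdef, hLdef, hAdef, dif_pos hi', dif_pos hj']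
          ring
        rw [Finset.sum_congr rfl e2, ← Finset.mul_sum,
          dsum p (fun j => ev j * ((v j) ⬝ᵥ (fun b => Γ b ⟨i, hi'⟩))^2), ← hqf ⟨i, hi'⟩]
      have conv2 : ∑ i ∈ Finset.range r, c i * L i
          = ∑ i : Fin r, (t2⁻¹ - (μ i)⁻¹) * ℓ i := by
        rw [← dsum r (fun i => (t2⁻¹ - (μ i)⁻¹) * ℓ i)]
        refine Finset.sum_congr rfl fun i hi => ?_
        have hi' : i < r := Finset.mem_range.mp hi
        have hip : i < p := lt_of_lt_of_le hi' hrp'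
        rw [dif_pos hi']
        simp only [hcdef, hLdef, dif_pos hi', dif_pos hip, hℓ]
        rfl
      rw [← conv1, ← conv2]
      exact hKF
    have hA : ∀ i : Fin r, Real.log (ℓ i) + 1 ≤ Real.log (μ i) + ℓ i * (μ i)⁻¹ := by
      intro i
      have h := log_bound (ℓ i) (μ i) (hℓpos i) (hμpos i)
      rw [div_eq_mul_inv] at h
      exact h
    have hAsum : ∑ i : Fin r, (Real.log (ℓ i) + 1)
        ≤ ∑ i : Fin r, (Real.log (μ i) + ℓ i * (μ i)⁻¹) :=
      Finset.sum_le_sum fun i _ => hA i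
    have hAsum' : ∑ i : Fin r, (Real.log (ℓ i) + 1)
        = (∑ i : Fin r, Real.log (ℓ i)) + (r:ℝ) := by
      rw [Finset.sum_add_distrib]
      simp
    have hB : ((p:ℝ)-(r:ℝ)) * Real.log σhat + ((p:ℝ)-(r:ℝ))
        ≤ ((p:ℝ)-(r:ℝ)) * Real.log t2
          + t2⁻¹ * (Matrix.trace S - ∑ i : Fin r, ℓ i) := by
      rw [hsplitS]
      have h1 := log_bound σhat t2 hσpos ht
      have h2 : ((p:ℝ)-(r:ℝ)) * (Real.log σhat + 1)
          ≤ ((p:ℝ)-(r:ℝ)) * (Real.log t2 + σhat / t2) :=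
        mul_le_mul_of_nonneg_left h1 (le_of_lt hprR)
      rw [div_eq_mul_inv] at h2
      calc ((p:ℝ)-(r:ℝ)) * Real.log σhat + ((p:ℝ)-(r:ℝ))
          = ((p:ℝ)-(r:ℝ)) * (Real.log σhat + 1) := by ring
        _ ≤ ((p:ℝ)-(r:ℝ)) * (Real.log t2 + σhat * t2⁻¹) := h2
        _ = ((p:ℝ)-(r:ℝ)) * Real.log t2 + t2⁻¹ * (σhat * ((p:ℝ)-(r:ℝ))) := by ring
    rw [ge_iff_le, core Γ μ t2 hΓ hμpos ht]
    have hT : ∑ j ∈ Finset.univ.filter (fun j : Fin p => (j:ℕ) < r), Real.log (ev j)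
        = ∑ i : Fin r, Real.log (ℓ i) := hfsum (fun j => Real.log (ev j))
    rw [hT]
    have e1 : ∑ i : Fin r, (Real.log (μ i) + q i * (μ i)⁻¹)
        = (∑ i : Fin r, Real.log (μ i)) + ∑ i : Fin r, q i * (μ i)⁻¹ :=
      Finset.sum_add_distrib
    have e2 : ∑ i : Fin r, (Real.log (μ i) + ℓ i * (μ i)⁻¹)
        = (∑ i : Fin r, Real.log (μ i)) + ∑ i : Fin r, ℓ i * (μ i)⁻¹ :=
      Finset.sum_add_distrib
    have e3 : ∑ i : Fin r, (t2⁻¹ - (μ i)⁻¹) * q i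
        = t2⁻¹ * (∑ i : Fin r, q i) - ∑ i : Fin r, q i * (μ i)⁻¹ := by
      rw [Finset.mul_sum, ← Finset.sum_sub_distrib]
      exact Finset.sum_congr rfl fun i _ => by ring
    have e4 : ∑ i : Fin r, (t2⁻¹ - (μ i)⁻¹) * ℓ i
        = t2⁻¹ * (∑ i : Fin r, ℓ i) - ∑ i : Fin r, ℓ i * (μ i)⁻¹ := by
      rw [Finset.mul_sum, ← Finset.sum_sub_distrib]
      exact Finset.sum_congr rfl fun i _ => by ring
    have e5 : t2⁻¹ * (Matrix.trace S - ∑ i : Fin r, q i)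
        = t2⁻¹ * (Matrix.trace S - ∑ i : Fin r, ℓ i)
          - (t2⁻¹ * (∑ i : Fin r, q i) - t2⁻¹ * (∑ i : Fin r, ℓ i)) := by ring
    have hpcast : (p:ℝ) = (r:ℝ) + ((p:ℝ) - (r:ℝ)) := by ring
    linarith [KF, hAsum, hAsum', hB, e1, e2, e3, e4, e5]
  · -- part 2: equality at Sig
    rw [hSigEq, core Γ₀ ℓ σhat hΓ₀ hℓpos hσpos]
    have eq1 : ∑ i : Fin r, (Real.log (ℓ i) + (Γ₀ᵀ * S * Γ₀) i i * (ℓ i)⁻¹)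
        = (∑ i : Fin r, Real.log (ℓ i)) + (r:ℝ) := by
      rw [Finset.sum_add_distrib]
      congr 1
      have : ∀ i : Fin r, (Γ₀ᵀ * S * Γ₀) i i * (ℓ i)⁻¹ = 1 := by
        intro i
        rw [hq₀ i]
        exact mul_inv_cancel₀ (ne_of_gt (hℓpos i))
      rw [Finset.sum_congr rfl fun i _ => this i]
      simp
    have eq2 : ∑ i : Fin r, (Γ₀ᵀ * S * Γ₀) i i = ∑ i : Fin r, ℓ i :=
      Finset.sum_congr rfl fun i _ => hq₀ i
    rw [eq1, eq2, hsplitS]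
    have hT : ∑ j ∈ Finset.univ.filter (fun j : Fin p => (j:ℕ) < r), Real.log (ev j)
        = ∑ i : Fin r, Real.log (ℓ i) := hfsum (fun j => Real.log (ev j))
    rw [hT]
    have : σhat⁻¹ * (σhat * ((p:ℝ) - (r:ℝ))) = (p:ℝ) - (r:ℝ) := by
      field_simp
    rw [this]
    ring
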